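/- Let A be an n×n irreducible Metzler matrix (off-diagonal entries nonnegative) that admits a strictly positive vector w with Aw = 0. Then 0 is an eigenvalue of A and every other eigenvalue λ of A satisfies Re(λ) < 0. -/

import Mathlib

open Matrix

theorem stmt5 (n : ℕ) (hn : 0 < n)
    (A : Matrix (Fin n) (Fin n) ℝ)
    (hMetzler : ∀ i j, i ≠ j → 0 ≤ A i j)
    (hirr : ∀ S : Set (Fin n), S.Nonempty → S ≠ Set.univ →
      ∃ i ∈ S, ∃ j, j ∉ S ∧ A i j ≠ 0)
    (w : Fin n → ℝ) (hw : ∀ i, 0 < w i) (hAw : A *ᵥ w = 0) :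
    (∃ x : Fin n → ℂ, x ≠ 0 ∧ (A.map (Complex.ofReal ·)) *ᵥ x = (0 : ℂ) • x) ∧
    ∀ (μ : ℂ) (x : Fin n → ℂ), x ≠ 0 →
      (A.map (Complex.ofReal ·)) *ᵥ x = μ • x → μ ≠ 0 → μ.re < 0 := by
  have hrow : ∀ i, ∑ j, A i j * w j = 0 := by
    intro i
    have := congrFun hAw i
    simpa [mulVec, dotProduct] using this
  constructor
  · refine ⟨fun i => (w i : ℂ), ?_, ?_⟩
    · intro h
      have := congrFun h ⟨0, hn⟩
      simp only [Pi.zero_apply, Complex.ofReal_eq_zero] at this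
      exact (hw _).ne' this
    · funext i
      have h0 := hrow i
      simp only [mulVec, dotProduct, map_apply, Pi.smul_apply, zero_smul, Pi.zero_apply]
      have : ((∑ j, A i j * w j : ℝ) : ℂ) = 0 := by rw [h0]; simp
      push_cast at this
      simpa using this
  · intro μ x hx hAx hμ
    obtain ⟨i, -, hi⟩ := Finset.exists_max_image Finset.univ
      (fun j => ‖x j‖ / w j) ⟨⟨0, hn⟩, Finset.mem_univ _⟩
    set M := ‖x i‖ / w i with hM
    have hMb : ∀ j, ‖x j‖ ≤ M * w j := by
      intro j
      exact (div_le_iff₀ (hw j)).mp (hi j (Finset.mem_univ j))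
    have hMpos : 0 < M := by
      obtain ⟨j, hj⟩ := Function.ne_iff.mp hx
      have h1 : 0 < ‖x j‖ / w j :=
        div_pos (by simpa using hj) (hw j)
      exact lt_of_lt_of_le h1 (hi j (Finset.mem_univ j))
    have hxi : ‖x i‖ = M * w i := by
      rw [hM, div_mul_cancel₀]
      exact (hw i).ne'
    have heq : ∑ j, (A i j : ℂ) * x j = μ * x i := by
      have := congrFun hAx i
      simpa [mulVec, dotProduct, map_apply] using this
    have hsplit : (μ - (A i i : ℂ)) * x i
        = ∑ j ∈ Finset.univ.erase i, (A i j : ℂ) * x j := by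
      rw [← Finset.add_sum_erase _ _ (Finset.mem_univ i)] at heq
      linear_combination -heq
    have habs : ‖μ - (A i i : ℂ)‖ * (M * w i) ≤ (-(A i i)) * (M * w i) := by
      have h1 : ‖μ - (A i i : ℂ)‖ * (M * w i)
          = ‖(μ - (A i i : ℂ)) * x i‖ := by
        rw [norm_mul, hxi]
      rw [h1, hsplit]
      have h2 : ∑ j ∈ Finset.univ.erase i, A i j * w j = -(A i i * w i) := by
        have := hrow i
        rw [← Finset.add_sum_erase _ _ (Finset.mem_univ i)] at this
        linarith
      calc ‖∑ j ∈ Finset.univ.erase i, (A i j : ℂ) * x j‖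
          ≤ ∑ j ∈ Finset.univ.erase i, ‖(A i j : ℂ) * x j‖ :=
            norm_sum_le _ _
        _ ≤ ∑ j ∈ Finset.univ.erase i, A i j * (M * w j) := by
            apply Finset.sum_le_sum
            intro j hj
            rw [norm_mul, Complex.norm_real, Real.norm_eq_abs,
              abs_of_nonneg (hMetzler i j (Finset.ne_of_mem_erase hj).symm)]
            exact mul_le_mul_of_nonneg_left (hMb j)
              (hMetzler i j (Finset.ne_of_mem_erase hj).symm)
        _ = M * ∑ j ∈ Finset.univ.erase i, A i j * w j := by
            rw [Finset.mul_sum]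
            exact Finset.sum_congr rfl fun j _ => by ring
        _ = (-(A i i)) * (M * w i) := by rw [h2]; ring
    have hkey : ‖μ - (A i i : ℂ)‖ ≤ -(A i i) :=
      le_of_mul_le_mul_right habs (mul_pos hMpos (hw i))
    have hcle : A i i ≤ 0 := by
      have := (norm_nonneg (μ - (A i i : ℂ))).trans hkey
      linarith
    have hnsq : (μ.re - A i i) ^ 2 + μ.im ^ 2 ≤ (A i i) ^ 2 := by
      have hs := Complex.sq_norm (μ - (A i i : ℂ))
      rw [Complex.normSq_apply] at hs
      simp only [Complex.sub_re, Complex.ofReal_re, Complex.sub_im, Complex.ofReal_im,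
        sub_zero] at hs
      nlinarith [norm_nonneg (μ - (A i i : ℂ)), hkey]
    have hμsq : 0 < μ.re ^ 2 + μ.im ^ 2 := by
      have : μ.re ≠ 0 ∨ μ.im ≠ 0 := by
        by_contra h
        push_neg at h
        exact hμ (Complex.ext h.1 h.2)
      rcases this with h | h
      · positivity
      · positivity
    nlinarith [mul_nonneg (neg_nonneg.mpr hcle) (le_of_lt hμsq)]
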